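/- If X = (x_1,…,x_m) ⊆ ℝ^n consists of unit vectors, 0 ∈ int(conv X), and α ∈ ℝ^m satisfies: for every facet F_j of conv X and every i ∈ I_{F_j}, α_i ≤ min{⟨y, x_i⟩ : y ∈ cone(F_j) ∩ B}, then X is α-rectifying on the closed unit ball B (for every x ∈ B the active set {x_i : ⟨x,x_i⟩ ≥ α_i} spans ℝ^n). -/

import Mathlib

open RealInnerProductSpace

/-- Polytope bias estimation: if `X` consists of unit vectors, `0` lies in the interior
of `P = conv X` (omnidirectionality), the facets `F_1,…,F_J` of `P` (cut out by
supporting hyperplanes, covering the boundary of `P`) satisfy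
`α_i ≤ min {⟨y, x_i⟩ : y ∈ cone(F_j) ∩ B}` for every vertex `x_i` on `F_j`, then `X` is
`α`-rectifying on the closed unit ball. -/
theorem stmt_19 (n m J : ℕ) (x : Fin m → EuclideanSpace ℝ (Fin n))
    (hnorm : ∀ i, ‖x i‖ = 1)
    (P : Set (EuclideanSpace ℝ (Fin n))) (hP : P = convexHull ℝ (Set.range x))
    (h0 : (0 : EuclideanSpace ℝ (Fin n)) ∈ interior P)
    (F : Fin J → Set (EuclideanSpace ℝ (Fin n)))
    (a : Fin J → EuclideanSpace ℝ (Fin n)) (b : Fin J → ℝ)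
    (ha : ∀ j, a j ≠ 0)
    (hsupp : ∀ j, ∀ v ∈ P, ⟪a j, v⟫ ≤ b j)
    (hFdef : ∀ j, F j = {v ∈ P | ⟪a j, v⟫ = b j})
    (hdim : ∀ j, Module.finrank ℝ (affineSpan ℝ (F j)).direction = n - 1)
    (hbd : frontier P = ⋃ j, F j)
    (α : Fin m → ℝ)
    (hα : ∀ j, ∀ i, x i ∈ F j →
      ∀ y : EuclideanSpace ℝ (Fin n), (∃ t ≥ (0:ℝ), ∃ v ∈ F j, y = t • v) → ‖y‖ ≤ 1 →
        α i ≤ ⟪y, x i⟫) :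
    ∀ v : EuclideanSpace ℝ (Fin n), ‖v‖ ≤ 1 →
      Submodule.span ℝ {w | ∃ i, w = x i ∧ ⟪v, x i⟫ ≥ α i} = ⊤ := by
  -- trivial case n = 0
  rcases Nat.eq_zero_or_pos n with hn | hn
  · subst hn
    intro v _
    have : Subsingleton (EuclideanSpace ℝ (Fin 0)) := by
      constructor; intro u w; ext i; exact absurd i.2 (Nat.not_lt_zero _)
    exact Subsingleton.elim _ _
  -- basic facts about P
  have hPconv : Convex ℝ P := hP ▸ convex_convexHull ℝ _
  have hPnhds : P ∈ nhds (0 : EuclideanSpace ℝ (Fin n)) :=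
    mem_interior_iff_mem_nhds.mp h0
  have hPcompact : IsCompact P := hP ▸ (Set.finite_range x).isCompact_convexHull (𝕜 := ℝ)
  have hPbdd : Bornology.IsVonNBounded ℝ P :=
    NormedSpace.isVonNBounded_of_isBounded ℝ hPcompact.isBounded
  have hPabs : Absorbent ℝ P := absorbent_nhds_zero hPnhds
  -- b j > 0 for each j
  have hbpos : ∀ j, 0 < b j := by
    intro j
    obtain ⟨ε, hε, hball⟩ := Metric.mem_nhds_iff.mp hPnhds
    set z : EuclideanSpace ℝ (Fin n) := ((ε / 2) / ‖a j‖) • a j with hz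
    have hzP : z ∈ P := by
      apply hball
      have hna : 0 < ‖a j‖ := norm_pos_iff.mpr (ha j)
      simp only [Metric.mem_ball, dist_zero_right, hz, norm_smul, Real.norm_eq_abs]
      rw [abs_of_nonneg (by positivity), div_mul_cancel₀ _ hna.ne']
      linarith
    have := hsupp j z hzP
    rw [hz, real_inner_smul_right, real_inner_self_eq_norm_sq] at this
    have hna : 0 < ‖a j‖ := norm_pos_iff.mpr (ha j)
    have : 0 < (ε / 2) / ‖a j‖ * (‖a j‖ * ‖a j‖) := by positivity
    linarith
  -- key: for any j, any w ∈ F j, any t ≥ 0 with v = t • w and ‖v‖ ≤ 1, the claim holds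
  have key : ∀ (j : Fin J) (w : EuclideanSpace ℝ (Fin n)), w ∈ F j →
      ∀ (t : ℝ), 0 ≤ t → ∀ (v : EuclideanSpace ℝ (Fin n)), v = t • w → ‖v‖ ≤ 1 →
      Submodule.span ℝ {w | ∃ i, w = x i ∧ ⟪v, x i⟫ ≥ α i} = ⊤ := by
    intro j w hwF t ht v hv hvn
    -- the active set contains all vertices on F j
    set S : Set (EuclideanSpace ℝ (Fin n)) := {z | ∃ i, z = x i ∧ x i ∈ F j} with hS
    have hSsub : S ⊆ {w | ∃ i, w = x i ∧ ⟪v, x i⟫ ≥ α i} := by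
      rintro z ⟨i, rfl, hiF⟩
      exact ⟨i, rfl, hα j i hiF v ⟨t, ht, w, hwF, hv⟩ hvn⟩
    suffices hStop : Submodule.span ℝ S = ⊤ by
      exact top_unique (hStop ▸ Submodule.span_mono hSsub)
    -- every point of F j is in span S
    have hFspan : F j ⊆ (Submodule.span ℝ S : Set (EuclideanSpace ℝ (Fin n))) := by
      intro z hzF
      have hzP : z ∈ P := ((hFdef j) ▸ hzF).1
      have hzb : ⟪a j, z⟫ = b j := ((hFdef j) ▸ hzF).2
      rw [hP, convexHull_range_eq_exists_affineCombination] at hzP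
      obtain ⟨s, c, hc0, hc1, hcz⟩ := hzP
      rw [s.affineCombination_eq_linear_combination x c hc1] at hcz
      -- each i ∈ s with c i ≠ 0 has x i ∈ F j
      have hsum0 : ∑ i ∈ s, c i * (b j - ⟪a j, x i⟫) = 0 := by
        have : ⟪a j, z⟫ = ∑ i ∈ s, c i * ⟪a j, x i⟫ := by
          rw [← hcz, inner_sum]
          exact Finset.sum_congr rfl fun i _ => real_inner_smul_right _ _ _
        have hb' : ∑ i ∈ s, c i * b j = b j := by
          rw [← Finset.sum_mul, hc1, one_mul]
        calc ∑ i ∈ s, c i * (b j - ⟪a j, x i⟫)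
            = (∑ i ∈ s, c i * b j) - ∑ i ∈ s, c i * ⟪a j, x i⟫ := by
              rw [← Finset.sum_sub_distrib]; exact Finset.sum_congr rfl fun i _ => by ring
          _ = b j - ⟪a j, z⟫ := by rw [hb', this]
          _ = 0 := by rw [hzb, sub_self]
      have hterm : ∀ i ∈ s, c i * (b j - ⟪a j, x i⟫) = 0 := by
        intro i hi
        have h1 : ∀ i ∈ s, 0 ≤ c i * (b j - ⟪a j, x i⟫) := fun i hi =>
          mul_nonneg (hc0 i hi) (sub_nonneg.mpr (hsupp j (x i) (hP ▸ subset_convexHull ℝ _ ⟨i, rfl⟩)))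
        exact (Finset.sum_eq_zero_iff_of_nonneg h1).mp hsum0 i hi
      rw [← hcz]
      apply Submodule.sum_mem
      intro i hi
      rcases eq_or_ne (c i) 0 with hci | hci
      · rw [hci, zero_smul]; exact Submodule.zero_mem _
      · apply Submodule.smul_mem
        apply Submodule.subset_span
        refine ⟨i, rfl, ?_⟩
        rw [hFdef]
        refine ⟨hP ▸ subset_convexHull ℝ _ ⟨i, rfl⟩, ?_⟩
        have := hterm i hi
        rcases mul_eq_zero.mp this with h | h
        · exact absurd h hci
        · linarith [sub_eq_zero.mp h]
    -- the vectorSpan of F j is contained in span S, w ∈ span S but w ∉ vectorSpan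
    have hvs_le : vectorSpan ℝ (F j) ≤ Submodule.span ℝ S := by
      apply Submodule.span_le.mpr
      rintro u ⟨u1, hu1, u2, hu2, rfl⟩
      exact sub_mem (hFspan hu1) (hFspan hu2)
    have hinner0 : ∀ u ∈ vectorSpan ℝ (F j), ⟪a j, u⟫ = 0 := by
      intro u hu
      induction hu using Submodule.span_induction with
      | mem u hu =>
        obtain ⟨u1, hu1, u2, hu2, rfl⟩ := hu
        have h1 : ⟪a j, u1⟫ = b j := ((hFdef j) ▸ hu1).2
        have h2 : ⟪a j, u2⟫ = b j := ((hFdef j) ▸ hu2).2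
        show ⟪a j, u1 - u2⟫ = 0
        rw [inner_sub_right, h1, h2, sub_self]
      | zero => exact inner_zero_right _
      | add u1 u2 _ _ ih1 ih2 => rw [inner_add_right, ih1, ih2, add_zero]
      | smul c u _ ih => rw [real_inner_smul_right, ih, mul_zero]
    have hwnotvs : w ∉ vectorSpan ℝ (F j) := by
      intro hw
      have h1 : ⟪a j, w⟫ = b j := ((hFdef j) ▸ hwF).2
      have h2 := hinner0 w hw
      have := hbpos j
      rw [h2] at h1
      linarith
    -- dimension count
    have hlt : vectorSpan ℝ (F j) < vectorSpan ℝ (F j) ⊔ Submodule.span ℝ {w} := by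
      refine lt_of_le_of_ne le_sup_left ?_
      intro heq
      apply hwnotvs
      rw [heq]
      exact Submodule.mem_sup_right (Submodule.mem_span_singleton_self w)
    have hrank : n - 1 < Module.finrank ℝ ↥(vectorSpan ℝ (F j) ⊔ Submodule.span ℝ {w}) := by
      have := Submodule.finrank_lt_finrank_of_lt hlt
      have hd : Module.finrank ℝ (vectorSpan ℝ (F j)) = n - 1 := by
        have := hdim j
        rwa [direction_affineSpan] at this
      omega
    have hle : vectorSpan ℝ (F j) ⊔ Submodule.span ℝ {w} ≤ Submodule.span ℝ S := by
      refine sup_le hvs_le ?_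
      rw [Submodule.span_le, Set.singleton_subset_iff]
      exact hFspan hwF
    have hrankS : n ≤ Module.finrank ℝ (Submodule.span ℝ S) := by
      have h1 := Submodule.finrank_mono hle
      omega
    apply Submodule.eq_top_of_finrank_eq
    have hfin : Module.finrank ℝ (EuclideanSpace ℝ (Fin n)) = n := by
      simp [finrank_euclideanSpace]
    have hle2 := Submodule.finrank_le (Submodule.span ℝ S)
    rw [hfin] at hle2 ⊢
    omega
  -- now the main argument via the gauge function
  intro v hv
  rcases eq_or_ne v 0 with rfl | hv0
  · -- find any point on the frontier
    set u : EuclideanSpace ℝ (Fin n) := EuclideanSpace.single ⟨0, hn⟩ 1 with hu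
    have hu0 : u ≠ 0 := by
      intro h
      have : ‖u‖ = 1 := by simp [hu]
      rw [h, norm_zero] at this; norm_num at this
    have hg : 0 < gauge P u := (gauge_pos hPabs hPbdd).mpr hu0
    set w := (gauge P u)⁻¹ • u with hw
    have hwfr : w ∈ frontier P := by
      rw [← gauge_eq_one_iff_mem_frontier hPconv hPnhds, hw,
        gauge_smul_of_nonneg (inv_nonneg.mpr hg.le), smul_eq_mul,
        inv_mul_cancel₀ hg.ne']
    rw [hbd] at hwfr
    obtain ⟨j, hj⟩ := Set.mem_iUnion.mp hwfr
    exact key j w hj 0 le_rfl 0 (zero_smul ℝ w).symm (by simp)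
  · have hg : 0 < gauge P v := (gauge_pos hPabs hPbdd).mpr hv0
    set w := (gauge P v)⁻¹ • v with hw
    have hwfr : w ∈ frontier P := by
      rw [← gauge_eq_one_iff_mem_frontier hPconv hPnhds, hw,
        gauge_smul_of_nonneg (inv_nonneg.mpr hg.le), smul_eq_mul,
        inv_mul_cancel₀ hg.ne']
    rw [hbd] at hwfr
    obtain ⟨j, hj⟩ := Set.mem_iUnion.mp hwfr
    refine key j w hj (gauge P v) hg.le v ?_ hv
    rw [hw, smul_smul, mul_inv_cancel₀ hg.ne', one_smul]
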